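/- Let x^{(n)} be the projected gradient iterates satisfying Condition (B), and suppose x^# is a weak accumulation point of (x^{(n)}). Then x^# minimizes D(x) = ‖Kx - y‖² over B_R. -/

import Mathlib

open scoped ENNReal NNReal
open Filter

/-- The `ℓ¹`-ball of radius `R` inside `ℓ²(I)`. -/
noncomputable def l1Ball (I : Type*) (R : ℝ) : Set (lp (fun _ : I => ℝ) 2) :=
  {x | (∑' i, (‖x i‖₊ : ℝ≥0∞)) ≤ ENNReal.ofReal R}

lemma l1Ball_sum_le {I : Type*} {R : ℝ} (hR : 0 ≤ R) {f : lp (fun _ : I => ℝ) 2}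
    (hf : f ∈ l1Ball I R) (s : Finset I) : ∑ i ∈ s, ‖f i‖ ≤ R := by
  rw [← ENNReal.ofReal_le_ofReal_iff hR,
    ENNReal.ofReal_sum_of_nonneg (fun i _ => norm_nonneg _)]
  simp only [ofReal_norm, enorm_eq_nnnorm]
  exact le_trans (ENNReal.sum_le_tsum s) hf

lemma l1Ball_norm_le {I : Type*} {R : ℝ} (hR : 0 ≤ R) {f : lp (fun _ : I => ℝ) 2}
    (hf : f ∈ l1Ball I R) : ‖f‖ ≤ R := by
  have h2 : ‖f‖ ^ 2 ≤ R ^ 2 := by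
    rw [← real_inner_self_eq_norm_sq, lp.inner_eq_tsum]
    simp only [RCLike.inner_apply, RCLike.conj_to_real]
    apply tsum_le_of_sum_le' (by positivity)
    intro s
    have hT := l1Ball_sum_le hR hf s
    calc ∑ i ∈ s, f i * f i ≤ ∑ i ∈ s, ‖f i‖ * R := by
          apply Finset.sum_le_sum
          intro i hi
          have h1 : f i * f i ≤ ‖f i‖ * ‖f i‖ := by
            rw [Real.norm_eq_abs]; nlinarith [abs_nonneg (f i), le_abs_self (f i), neg_abs_le (f i)]
          refine h1.trans (mul_le_mul_of_nonneg_left ?_ (norm_nonneg _))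
          exact le_trans (Finset.single_le_sum (fun i _ => norm_nonneg (f i)) hi) hT
      _ = (∑ i ∈ s, ‖f i‖) * R := by rw [Finset.sum_mul]
      _ ≤ R * R := mul_le_mul_of_nonneg_right hT hR
      _ = R ^ 2 := by ring
  nlinarith [norm_nonneg f]

lemma l1Ball_convex {I : Type*} {R : ℝ} : Convex ℝ (l1Ball I R) := by
  intro f hf g hg a b ha hb hab
  show (∑' i, (‖(a • f + b • g) i‖₊ : ℝ≥0∞)) ≤ ENNReal.ofReal R
  have hcoeff : ∀ i, (‖(a • f + b • g) i‖₊ : ℝ≥0∞) ≤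
      ENNReal.ofReal a * ‖f i‖₊ + ENNReal.ofReal b * ‖g i‖₊ := by
    intro i
    have hv : (a • f + b • g) i = a * f i + b * g i := by
      rfl
    rw [hv]
    calc (‖a * f i + b * g i‖₊ : ℝ≥0∞) ≤ (‖a * f i‖₊ : ℝ≥0∞) + ‖b * g i‖₊ := by
          exact_mod_cast nnnorm_add_le _ _
      _ = ENNReal.ofReal a * ‖f i‖₊ + ENNReal.ofReal b * ‖g i‖₊ := by
          rw [nnnorm_mul, nnnorm_mul]
          push_cast
          rw [← enorm_eq_nnnorm a, ← ofReal_norm a, ← enorm_eq_nnnorm b, ← ofReal_norm b,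
            Real.norm_of_nonneg ha, Real.norm_of_nonneg hb]
  calc (∑' i, (‖(a • f + b • g) i‖₊ : ℝ≥0∞))
      ≤ ∑' i, (ENNReal.ofReal a * ‖f i‖₊ + ENNReal.ofReal b * ‖g i‖₊) :=
        ENNReal.tsum_le_tsum hcoeff
    _ = ENNReal.ofReal a * (∑' i, (‖f i‖₊:ℝ≥0∞)) + ENNReal.ofReal b * (∑' i, (‖g i‖₊:ℝ≥0∞)) := by
        rw [ENNReal.tsum_add, ENNReal.tsum_mul_left, ENNReal.tsum_mul_left]
    _ ≤ ENNReal.ofReal a * ENNReal.ofReal R + ENNReal.ofReal b * ENNReal.ofReal R := by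
        gcongr <;> [exact hf; exact hg]
    _ = ENNReal.ofReal R := by
        rw [← add_mul, ← ENNReal.ofReal_add ha hb, hab, ENNReal.ofReal_one, one_mul]

lemma proj_variational {F : Type*} [NormedAddCommGroup F] [InnerProductSpace ℝ F]
    {S : Set F} (hS : Convex ℝ S) {u v : F} (hv : v ∈ S)
    (hmin : ∀ w ∈ S, ‖v - u‖ ≤ ‖w - u‖) :
    ∀ w ∈ S, (inner ℝ (u - v) (w - v) : ℝ) ≤ 0 := by
  have hne : Nonempty S := ⟨⟨v, hv⟩⟩
  apply (norm_eq_iInf_iff_real_inner_le_zero hS hv).1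
  apply le_antisymm
  · apply le_ciInf
    intro w
    rw [norm_sub_rev u v, norm_sub_rev u w]
    exact hmin w w.2
  · exact ciInf_le ⟨0, by rintro t ⟨w, rfl⟩; exact norm_nonneg _⟩ (⟨v, hv⟩ : S)

set_option maxHeartbeats 1600000 in
/-- If the projected gradient iterates satisfy Condition (B) and `xsharp` is a weak
accumulation point of the sequence `(x n)` (weak limit of a subsequence), then `xsharp`
minimizes `D(x) = ‖Kx - y‖²` over `B_R`. -/
theorem stmt17 {I : Type*} [Countable I] {H : Type*} [NormedAddCommGroup H]
    [InnerProductSpace ℝ H] [CompleteSpace H]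
    (K : lp (fun _ : I => ℝ) 2 →L[ℝ] H) (hK : ‖K‖ < 1) (y : H) (R : ℝ) (hR : 0 < R)
    (r : ℝ) (hr : r = ‖(ContinuousLinearMap.adjoint K).comp K‖) (hr1 : r < 1)
    (β : ℕ → ℝ) (βbar : ℝ) (hβ1 : ∀ n, 1 ≤ β n) (hβ2 : ∀ n, β n ≤ βbar)
    (x : ℕ → lp (fun _ : I => ℝ) 2)
    (hiter : ∀ n : ℕ, x (n + 1) ∈ l1Ball I R ∧
      ∀ w ∈ l1Ball I R,
        ‖x (n + 1) - (x n + β n • (ContinuousLinearMap.adjoint K) (y - K (x n)))‖ ≤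
          ‖w - (x n + β n • (ContinuousLinearMap.adjoint K) (y - K (x n)))‖)
    (hB2 : ∀ n : ℕ, β n * ‖K (x (n + 1) - x n)‖ ^ 2 ≤ r * ‖x (n + 1) - x n‖ ^ 2)
    (xsharp : lp (fun _ : I => ℝ) 2) (φ : ℕ → ℕ) (hφ : StrictMono φ)
    (hweak : ∀ z : lp (fun _ : I => ℝ) 2,
      Filter.Tendsto (fun k : ℕ => (inner ℝ (x (φ k)) z : ℝ)) Filter.atTop
        (nhds (inner ℝ xsharp z : ℝ))) :
    xsharp ∈ l1Ball I R ∧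
    ∀ w ∈ l1Ball I R, ‖K xsharp - y‖ ^ 2 ≤ ‖K w - y‖ ^ 2 := by
  classical
  have hR' : 0 ≤ R := hR.le
  have hr0 : 0 ≤ r := hr ▸ norm_nonneg _
  have hβbar : (0:ℝ) < βbar := lt_of_lt_of_le one_pos ((hβ1 0).trans (hβ2 0))
  have hball : ∀ n, 1 ≤ n → x n ∈ l1Ball I R := by
    intro n hn
    match n, hn with
    | (m+1), _ => exact (hiter m).1
  -- Part 1 : xsharp ∈ l1Ball
  have hmem : xsharp ∈ l1Ball I R := by
    have hcoord : ∀ i : I, Tendsto (fun k => x (φ k) i) atTop (nhds (xsharp i)) := by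
      intro i
      have h := hweak (lp.single 2 i (1:ℝ))
      simp only [lp.inner_single_right, RCLike.inner_apply, RCLike.conj_to_real, mul_one, one_mul] at h
      exact h
    show (∑' i, (‖xsharp i‖₊ : ℝ≥0∞)) ≤ ENNReal.ofReal R
    rw [ENNReal.tsum_eq_iSup_sum]
    apply iSup_le
    intro s
    have hsum : ∑ i ∈ s, ‖xsharp i‖ ≤ R := by
      have ht : Tendsto (fun k => ∑ i ∈ s, ‖x (φ k) i‖) atTop (nhds (∑ i ∈ s, ‖xsharp i‖)) :=
        tendsto_finset_sum s (fun i _ => (hcoord i).norm)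
      apply le_of_tendsto ht
      filter_upwards [eventually_ge_atTop 1] with k hk
      exact l1Ball_sum_le hR' (hball (φ k) (le_trans hk (hφ.le_apply))) s
    calc ∑ i ∈ s, (‖xsharp i‖₊ : ℝ≥0∞) = ENNReal.ofReal (∑ i ∈ s, ‖xsharp i‖) := by
          rw [ENNReal.ofReal_sum_of_nonneg (fun i _ => norm_nonneg _)]
          simp only [ofReal_norm, enorm_eq_nnnorm]
      _ ≤ ENNReal.ofReal R := ENNReal.ofReal_le_ofReal hsum
  refine ⟨hmem, ?_⟩
  -- Variational inequality
  have hVI : ∀ n, ∀ w ∈ l1Ball I R,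
      (inner ℝ ((x n + β n • (ContinuousLinearMap.adjoint K) (y - K (x n))) - x (n+1))
        (w - x (n+1)) : ℝ) ≤ 0 := by
    intro n
    exact proj_variational l1Ball_convex (hiter n).1 (fun w' hw' => (hiter n).2 w' hw')
  -- Δ → 0
  have hΔ0 : Tendsto (fun n => x (n + 1) - x n) atTop (nhds 0) := by
    set c : ℝ := (2 - r) / βbar with hc_def
    have hc : 0 < c := div_pos (by linarith) hβbar
    set d : ℕ → ℝ := fun n => ‖K (x n) - y‖ ^ 2 with hd_def
    have hstep : ∀ n : ℕ, c * ‖x (n+2) - x (n+1)‖ ^ 2 ≤ d (n+1) - d (n+2) := by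
      intro n
      set m := n + 1 with hm
      set Δ : lp (fun _ : I => ℝ) 2 := x (m+1) - x m with hΔ
      set P : ℝ := inner ℝ (y - K (x m)) (K Δ) with hP_def
      have hvi := hVI m (x m) (hball m (by omega))
      have hexp : (inner ℝ ((x m + β m • (ContinuousLinearMap.adjoint K) (y - K (x m))) - x (m+1))
          (x m - x (m+1)) : ℝ) = ‖Δ‖^2 - β m * P := by
        have h1 : (x m + β m • (ContinuousLinearMap.adjoint K) (y - K (x m))) - x (m+1)
            = β m • (ContinuousLinearMap.adjoint K) (y - K (x m)) - Δ := by
          rw [hΔ]; abel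
        have h2 : x m - x (m+1) = -Δ := by rw [hΔ]; abel
        rw [h1, h2, inner_neg_right, inner_sub_left, real_inner_smul_left,
          ContinuousLinearMap.adjoint_inner_left, real_inner_self_eq_norm_sq, ← hP_def]
        ring
      rw [hexp] at hvi
      have hP : ‖Δ‖^2 ≤ β m * P := by linarith
      have hCB : β m * ‖K Δ‖^2 ≤ r * ‖Δ‖^2 := hB2 m
      have hKx : K (x (m+1)) - y = (K (x m) - y) + K Δ := by
        rw [hΔ, map_sub]; abel
      have hd1 : d (m+1) = d m + 2 * (inner ℝ (K (x m) - y) (K Δ) : ℝ) + ‖K Δ‖^2 := by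
        show ‖K (x (m+1)) - y‖^2 = _
        rw [hKx, norm_add_sq_real]
      have hd2 : (inner ℝ (K (x m) - y) (K Δ) : ℝ) = -P := by
        rw [hP_def, ← inner_neg_left, neg_sub]
      have hβm1 := hβ1 m
      have hβm2 := hβ2 m
      have hgoal : c * ‖Δ‖^2 ≤ 2 * P - ‖K Δ‖^2 := by
        rw [hc_def, div_mul_eq_mul_div, div_le_iff₀ hβbar]
        have hP0 : 0 ≤ P := by nlinarith [sq_nonneg ‖Δ‖]
        nlinarith [mul_nonneg (le_trans (by linarith : (0:ℝ) ≤ β m) hβm2)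
            (by linarith : (0:ℝ) ≤ β m * P - ‖Δ‖^2),
          mul_nonneg (le_trans (by linarith : (0:ℝ) ≤ β m) hβm2)
            (by linarith : (0:ℝ) ≤ r * ‖Δ‖^2 - β m * ‖K Δ‖^2),
          mul_nonneg (by linarith : (0:ℝ) ≤ βbar - β m)
            (mul_nonneg (by linarith : (0:ℝ) ≤ 2 - r) (sq_nonneg ‖Δ‖))]
      have : d m - d (m+1) = 2 * P - ‖K Δ‖^2 := by rw [hd1, hd2]; ring
      linarith
    have hd0 : ∀ n, 0 ≤ d n := fun n => sq_nonneg _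
    have hsum : ∀ N, ∑ n ∈ Finset.range N, c * ‖x (n+2) - x (n+1)‖^2 ≤ d 1 := by
      intro N
      calc ∑ n ∈ Finset.range N, c * ‖x (n+2) - x (n+1)‖^2
          ≤ ∑ n ∈ Finset.range N, ((fun k => d (k+1)) n - (fun k => d (k+1)) (n+1)) :=
            Finset.sum_le_sum (fun n _ => hstep n)
        _ = d 1 - d (N+1) := Finset.sum_range_sub' (fun k => d (k+1)) N
        _ ≤ d 1 := by linarith [hd0 (N+1)]
    have hsummable : Summable (fun n => c * ‖x (n+2) - x (n+1)‖^2) :=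
      summable_of_sum_range_le (fun n => mul_nonneg hc.le (sq_nonneg _)) hsum
    have hsummable' : Summable (fun n => ‖x (n+2) - x (n+1)‖^2) :=
      (summable_mul_left_iff hc.ne').1 hsummable
    have hnorm : Tendsto (fun n => ‖x (n+2) - x (n+1)‖) atTop (nhds 0) := by
      have h := hsummable'.tendsto_atTop_zero.sqrt
      simp only [Real.sqrt_sq (norm_nonneg _), Real.sqrt_zero] at h
      exact h
    exact tendsto_zero_iff_norm_tendsto_zero.2 ((Filter.tendsto_add_atTop_iff_nat 1).1 hnorm)
  have hδ : Tendsto (fun k => x (φ k + 1) - x (φ k)) atTop (nhds 0) :=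
    hΔ0.comp hφ.tendsto_atTop
  have hδn : Tendsto (fun k => ‖x (φ k + 1) - x (φ k)‖) atTop (nhds 0) := by
    have := hδ.norm; simpa using this
  -- weak convergence of shifted subsequence
  have hu : ∀ z : lp (fun _ : I => ℝ) 2,
      Tendsto (fun k => (inner ℝ (x (φ k + 1)) z : ℝ)) atTop (nhds (inner ℝ xsharp z : ℝ)) := by
    intro z
    have h2 : Tendsto (fun k => (inner ℝ (x (φ k + 1) - x (φ k)) z : ℝ)) atTop
        (nhds (inner ℝ (0 : lp (fun _ : I => ℝ) 2) z : ℝ)) :=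
      hδ.inner tendsto_const_nhds
    rw [inner_zero_left] at h2
    have h3 : (fun k => (inner ℝ (x (φ k)) z : ℝ) + inner ℝ (x (φ k + 1) - x (φ k)) z)
        = fun k => (inner ℝ (x (φ k + 1)) z : ℝ) := by
      funext k; rw [inner_sub_left]; ring
    have h4 := (hweak z).add h2
    rw [h3, add_zero] at h4
    exact h4
  intro w hw
  -- key inequality from variational inequality along the subsequence
  have hwN : ‖w‖ ≤ R := l1Ball_norm_le hR' hw
  have hS : ∀ k : ℕ, (inner ℝ (y - K (x (φ k + 1))) (K w - K (x (φ k + 1))) : ℝ) ≤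
      2*R*‖x (φ k + 1) - x (φ k)‖
        - inner ℝ (K (x (φ k + 1) - x (φ k))) (K w - K (x (φ k + 1))) := by
    intro k
    set n := φ k with hn
    set δ : lp (fun _ : I => ℝ) 2 := x (n+1) - x n with hδ_def
    have hvi := hVI n w hw
    set T : ℝ := inner ℝ ((ContinuousLinearMap.adjoint K) (y - K (x n))) (w - x (n+1)) with hT_def
    set A : ℝ := inner ℝ δ (w - x (n+1)) with hA_def
    have hexp : (inner ℝ ((x n + β n • (ContinuousLinearMap.adjoint K) (y - K (x n))) - x (n+1))
        (w - x (n+1)) : ℝ) = β n * T - A := by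
      have h1 : (x n + β n • (ContinuousLinearMap.adjoint K) (y - K (x n))) - x (n+1)
          = β n • (ContinuousLinearMap.adjoint K) (y - K (x n)) - δ := by
        rw [hδ_def]; abel
      rw [h1, inner_sub_left, real_inner_smul_left, ← hT_def, ← hA_def]
    rw [hexp] at hvi
    have huN : ‖x (n+1)‖ ≤ R := l1Ball_norm_le hR' (hiter n).1
    have hwu : ‖w - x (n+1)‖ ≤ 2*R := by
      have := norm_sub_le w (x (n+1)); linarith
    have hA : A ≤ 2*R*‖δ‖ := by
      have h1 := real_inner_le_norm δ (w - x (n+1))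
      have h2 : ‖δ‖ * ‖w - x (n+1)‖ ≤ ‖δ‖ * (2*R) :=
        mul_le_mul_of_nonneg_left hwu (norm_nonneg δ)
      rw [hA_def]; nlinarith
    have hT : T ≤ 2*R*‖δ‖ := by
      rcases le_or_gt T 0 with h | h
      · exact h.trans (mul_nonneg (by linarith) (norm_nonneg δ))
      · have : T ≤ β n * T := le_mul_of_one_le_left h.le (hβ1 n)
        linarith
    have hT2 : T = (inner ℝ (y - K (x n)) (K w - K (x (n+1))) : ℝ) := by
      rw [hT_def, ContinuousLinearMap.adjoint_inner_left, map_sub]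
    have hsplit : y - K (x n) = (y - K (x (n+1))) + K δ := by
      rw [hδ_def, map_sub]; abel
    have hT3 : T = (inner ℝ (y - K (x (n+1))) (K w - K (x (n+1))) : ℝ)
        + inner ℝ (K δ) (K w - K (x (n+1))) := by
      rw [hT2, hsplit, inner_add_left]
    rw [hT3] at hT
    linarith
  -- limits
  set s := xsharp with hs_def
  have h1 : Tendsto (fun k => (inner ℝ y (K (x (φ k + 1))) : ℝ)) atTop
      (nhds (inner ℝ y (K s) : ℝ)) := by
    have hrw : ∀ v : lp (fun _ : I => ℝ) 2,
        (inner ℝ v ((ContinuousLinearMap.adjoint K) y) : ℝ) = inner ℝ y (K v) := fun v => by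
      rw [real_inner_comm, ContinuousLinearMap.adjoint_inner_left]
    have h := hu ((ContinuousLinearMap.adjoint K) y)
    simp only [hrw] at h
    exact h
  have h2 : Tendsto (fun k => (inner ℝ (K (x (φ k + 1))) (K w) : ℝ)) atTop
      (nhds (inner ℝ (K s) (K w) : ℝ)) := by
    have h := hu ((ContinuousLinearMap.adjoint K) (K w))
    simp only [ContinuousLinearMap.adjoint_inner_right] at h
    exact h
  have h3 : Tendsto (fun k => (inner ℝ (K (x (φ k + 1))) (K s) : ℝ)) atTop
      (nhds (‖K s‖^2 : ℝ)) := by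
    have h := hu ((ContinuousLinearMap.adjoint K) (K s))
    simp only [ContinuousLinearMap.adjoint_inner_right] at h
    rw [real_inner_self_eq_norm_sq] at h
    exact h
  have he : Tendsto (fun k => 2*R*‖x (φ k + 1) - x (φ k)‖
      - (inner ℝ (K (x (φ k + 1) - x (φ k))) (K w - K (x (φ k + 1))) : ℝ)) atTop (nhds 0) := by
    have t1 : Tendsto (fun k => 2*R*‖x (φ k + 1) - x (φ k)‖) atTop (nhds 0) := by
      have := hδn.const_mul (2*R); simpa using this
    have t2 : Tendsto (fun k => (inner ℝ (K (x (φ k + 1) - x (φ k))) (K w - K (x (φ k + 1))) : ℝ))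
        atTop (nhds 0) := by
      apply squeeze_zero_norm (a := fun k => (‖K‖*(‖K w‖ + ‖K‖*R)) * ‖x (φ k + 1) - x (φ k)‖)
      · intro k
        have ha := abs_real_inner_le_norm (K (x (φ k + 1) - x (φ k))) (K w - K (x (φ k + 1)))
        have hb := K.le_opNorm (x (φ k + 1) - x (φ k))
        have hKu : ‖K (x (φ k + 1))‖ ≤ ‖K‖*R := by
          refine (K.le_opNorm _).trans ?_
          exact mul_le_mul_of_nonneg_left (l1Ball_norm_le hR' (hiter (φ k)).1) (norm_nonneg _)
        have hcc : ‖K w - K (x (φ k + 1))‖ ≤ ‖K w‖ + ‖K‖*R := by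
          have := norm_sub_le (K w) (K (x (φ k + 1))); linarith
        have hmul : ‖K (x (φ k + 1) - x (φ k))‖ * ‖K w - K (x (φ k + 1))‖ ≤
            (‖K‖ * ‖x (φ k + 1) - x (φ k)‖) * (‖K w‖ + ‖K‖*R) := by
          apply mul_le_mul hb hcc (norm_nonneg _)
          positivity
        rw [Real.norm_eq_abs]
        calc |(inner ℝ (K (x (φ k + 1) - x (φ k))) (K w - K (x (φ k + 1))) : ℝ)|
            ≤ ‖K (x (φ k + 1) - x (φ k))‖ * ‖K w - K (x (φ k + 1))‖ := ha
          _ ≤ (‖K‖ * ‖x (φ k + 1) - x (φ k)‖) * (‖K w‖ + ‖K‖*R) := hmul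
          _ = (‖K‖*(‖K w‖ + ‖K‖*R)) * ‖x (φ k + 1) - x (φ k)‖ := by ring
      · have := hδn.const_mul (‖K‖*(‖K w‖ + ‖K‖*R)); simpa using this
    have := t1.sub t2
    simpa using this
  -- the key pointwise inequality
  have hkey : ∀ k : ℕ, (inner ℝ (K (x (φ k + 1))) (K s) : ℝ) ≤
      ((2*R*‖x (φ k + 1) - x (φ k)‖
        - (inner ℝ (K (x (φ k + 1) - x (φ k))) (K w - K (x (φ k + 1))) : ℝ))
        + (inner ℝ y (K (x (φ k + 1))) : ℝ) + (inner ℝ (K (x (φ k + 1))) (K w) : ℝ)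
        - (inner ℝ y (K w) : ℝ))/2 + ‖K s‖^2/2 := by
    intro k
    have hSk := hS k
    have hQ : (inner ℝ (y - K (x (φ k + 1))) (K w - K (x (φ k + 1))) : ℝ)
        = (inner ℝ y (K w) : ℝ) - inner ℝ y (K (x (φ k + 1))) - inner ℝ (K (x (φ k + 1))) (K w)
          + ‖K (x (φ k + 1))‖^2 := by
      rw [inner_sub_left, inner_sub_right, inner_sub_right, real_inner_self_eq_norm_sq]
      ring
    rw [hQ] at hSk
    have hCS := real_inner_le_norm (K (x (φ k + 1))) (K s)
    nlinarith [sq_nonneg (‖K (x (φ k + 1))‖ - ‖K s‖)]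
  have hRHS : Tendsto (fun k => ((2*R*‖x (φ k + 1) - x (φ k)‖
        - (inner ℝ (K (x (φ k + 1) - x (φ k))) (K w - K (x (φ k + 1))) : ℝ))
        + (inner ℝ y (K (x (φ k + 1))) : ℝ) + (inner ℝ (K (x (φ k + 1))) (K w) : ℝ)
        - (inner ℝ y (K w) : ℝ))/2 + ‖K s‖^2/2) atTop
      (nhds ((0 + (inner ℝ y (K s) : ℝ) + (inner ℝ (K s) (K w) : ℝ) - (inner ℝ y (K w) : ℝ))/2
        + ‖K s‖^2/2)) :=
    ((((he.add h1).add h2).sub tendsto_const_nhds).div_const 2).add tendsto_const_nhds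
  have hlim := le_of_tendsto_of_tendsto' h3 hRHS hkey
  -- conclude
  have hQpos : 0 ≤ (inner ℝ (K s - y) (K w - K s) : ℝ) := by
    have hexp : (inner ℝ (K s - y) (K w - K s) : ℝ) =
        (inner ℝ (K s) (K w) : ℝ) - ‖K s‖^2 - (inner ℝ y (K w) : ℝ) + (inner ℝ y (K s) : ℝ) := by
      rw [inner_sub_left, inner_sub_right, inner_sub_right, real_inner_self_eq_norm_sq]
      ring
    rw [hexp]; linarith
  have hfin : K w - y = (K s - y) + (K w - K s) := by abel
  calc ‖K s - y‖^2 ≤ ‖K s - y‖^2 + 2*(inner ℝ (K s - y) (K w - K s) : ℝ) + ‖K w - K s‖^2 := by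
        nlinarith [sq_nonneg ‖K w - K s‖]
    _ = ‖K w - y‖^2 := by rw [hfin, norm_add_sq_real]
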